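/- For all x, t ∈ ℝ with |x| ≤ 1 and |t| < 1, the generating function identity ∑_{n=0}^∞ P_n(x) t^n = 1/√(1 − 2xt + t²) holds. -/

import Mathlib

/-- The Legendre polynomials, via the three-term recurrence. -/
noncomputable def legendre : ℕ → ℝ → ℝ
  | 0 => fun _ => 1
  | 1 => fun x => x
  | n + 2 => fun x =>
      ((2 * (n : ℝ) + 3) * x * legendre (n + 1) x - ((n : ℝ) + 1) * legendre n x) / ((n : ℝ) + 2)

open Complex Metric FormalMultilinearSeries
open scoped NNReal ENNReal

-- shift of a coefficient sequence
def sh (h : ℕ → ℂ) : ℕ → ℂ := fun n => match n with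
  | 0 => 0
  | Nat.succ m => h m

@[simp] lemma sh_zero (h : ℕ → ℂ) : sh h 0 = 0 := rfl
@[simp] lemma sh_succ (h : ℕ → ℂ) (n : ℕ) : sh h (n + 1) = h n := rfl

lemma hasSum_shift {h : ℕ → ℂ} {z S : ℂ} (H : HasSum (fun n => h n * z ^ n) S) :
    HasSum (fun n => sh h n * z ^ n) (z * S) := by
  refine (hasSum_nat_add_iff' (f := fun n => sh h n * z ^ n) 1).mp ?_
  simp only [Finset.range_one, Finset.sum_singleton, sh_zero, zero_mul, sub_zero, sh_succ]
  simpa [pow_succ, mul_comm, mul_assoc, mul_left_comm] using H.mul_left z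

-- uniqueness of power series coefficients
lemma coeff_eq_zero (d : ℕ → ℂ)
    (h : ∀ z : ℂ, ‖z‖ < 1 → HasSum (fun n => d n * z ^ n) 0) : ∀ n, d n = 0 := by
  have hc : ∀ n, (FormalMultilinearSeries.ofScalars ℂ d).coeff n = d n := by
    intro n
    show (FormalMultilinearSeries.ofScalars ℂ d) n 1 = d n
    have h1 := FormalMultilinearSeries.ofScalars_apply_eq (E := ℂ) (c := d) (1 : ℂ) n
    simpa using h1
  have hq : HasFPowerSeriesAt (0 : ℂ → ℂ) (FormalMultilinearSeries.ofScalars ℂ d) 0 := by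
    rw [hasFPowerSeriesAt_iff]
    filter_upwards [Metric.ball_mem_nhds (0 : ℂ) one_pos] with z hz
    have h2 := h z (by simpa using hz)
    simpa [hc, smul_eq_mul, mul_comm] using h2
  intro n
  have h0 := hq.eq_zero
  have := hc n
  rw [h0] at this
  simpa [FormalMultilinearSeries.coeff] using this.symm

noncomputable def lr (x : ℝ) : ℂ := (x : ℂ) + (Real.sqrt (1 - x ^ 2) : ℂ) * I
noncomputable def lrb (x : ℝ) : ℂ := (x : ℂ) - (Real.sqrt (1 - x ^ 2) : ℂ) * I

noncomputable def LegF (x : ℝ) (z : ℂ) : ℂ :=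
  Complex.exp (-(Complex.log (1 - z * lr x) + Complex.log (1 - z * lrb x)) / 2)

section
variable {x : ℝ} (hx : |x| ≤ 1)

lemma hsq (hx : |x| ≤ 1) : (Real.sqrt (1 - x ^ 2) : ℝ) ^ 2 = 1 - x ^ 2 :=
  Real.sq_sqrt (by nlinarith [_root_.sq_abs x, abs_nonneg x])

lemma hsqC (hx : |x| ≤ 1) : ((Real.sqrt (1 - x ^ 2) : ℂ)) ^ 2 = 1 - (x : ℂ) ^ 2 := by
  exact_mod_cast congrArg (fun y : ℝ => (y : ℂ)) (hsq hx)

lemma l_sum : lr x + lrb x = 2 * (x : ℂ) := by simp [lr, lrb]; ring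

lemma l_prod (hx : |x| ≤ 1) : lr x * lrb x = 1 := by
  have h := hsqC hx
  simp only [lr, lrb]
  linear_combination h - ((Real.sqrt (1 - x ^ 2) : ℂ)) ^ 2 * Complex.I_sq

lemma l_norm (hx : |x| ≤ 1) : ‖lr x‖ = 1 := by
  have h := hsq hx
  have : Complex.normSq (lr x) = 1 := by
    simp [Complex.normSq_apply, lr]
    nlinarith [h]
  rw [Complex.norm_def, this, Real.sqrt_one]

lemma lb_norm (hx : |x| ≤ 1) : ‖lrb x‖ = 1 := by
  have h := hsq hx
  have : Complex.normSq (lrb x) = 1 := by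
    simp [Complex.normSq_apply, lrb]
    nlinarith [h]
  rw [Complex.norm_def, this, Real.sqrt_one]

lemma re_pos {w z : ℂ} (hw : ‖w‖ = 1) (hz : ‖z‖ < 1) : 0 < (1 - z * w).re := by
  have h1 : (z * w).re ≤ ‖z * w‖ := Complex.re_le_norm _
  have h2 : ‖z * w‖ < 1 := by rw [norm_mul, hw, mul_one]; exact hz
  have : (1 - z * w).re = 1 - (z * w).re := by simp
  linarith

lemma A_ne {w z : ℂ} (hw : ‖w‖ = 1) (hz : ‖z‖ < 1) : 1 - z * w ≠ 0 := by
  intro h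
  have := re_pos hw hz
  rw [h] at this
  simp at this

lemma A_slit {w z : ℂ} (hw : ‖w‖ = 1) (hz : ‖z‖ < 1) : 1 - z * w ∈ Complex.slitPlane :=
  Or.inl (re_pos hw hz)

lemma w_fac (hx : |x| ≤ 1) (z : ℂ) :
    1 - 2 * (x : ℂ) * z + z ^ 2 = (1 - z * lr x) * (1 - z * lrb x) := by
  linear_combination z * l_sum (x := x) - z ^ 2 * l_prod hx

lemma LegF_sq (hx : |x| ≤ 1) {z : ℂ} (hz : ‖z‖ < 1) :
    LegF x z ^ 2 * (1 - 2 * (x : ℂ) * z + z ^ 2) = 1 := by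
  have hA := A_ne (l_norm hx) hz
  have hB := A_ne (lb_norm hx) hz
  have key : LegF x z * LegF x z = ((1 - z * lr x) * (1 - z * lrb x))⁻¹ := by
    rw [LegF, ← Complex.exp_add]
    rw [show -(Complex.log (1 - z * lr x) + Complex.log (1 - z * lrb x)) / 2 +
        -(Complex.log (1 - z * lr x) + Complex.log (1 - z * lrb x)) / 2 =
        -(Complex.log (1 - z * lr x) + Complex.log (1 - z * lrb x)) by ring]
    rw [Complex.exp_neg, Complex.exp_add, Complex.exp_log hA, Complex.exp_log hB, mul_inv]
  rw [sq, key, w_fac hx]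
  field_simp

lemma LegF_zero : LegF x 0 = 1 := by
  simp [LegF]

lemma LegF_hasDerivAt (hx : |x| ≤ 1) {z : ℂ} (hz : ‖z‖ < 1) :
    HasDerivAt (LegF x)
      (LegF x z * (-(-lr x / (1 - z * lr x) + -lrb x / (1 - z * lrb x)) / 2)) z := by
  have hA : HasDerivAt (fun z : ℂ => 1 - z * lr x) (-lr x) z := by
    simpa using (hasDerivAt_mul_const (lr x)).const_sub (1 : ℂ)
  have hB : HasDerivAt (fun z : ℂ => 1 - z * lrb x) (-lrb x) z := by
    simpa using (hasDerivAt_mul_const (lrb x)).const_sub (1 : ℂ)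
  have hlogA := hA.clog (A_slit (l_norm hx) hz)
  have hlogB := hB.clog (A_slit (lb_norm hx) hz)
  exact (((hlogA.add hlogB).neg).div_const 2).cexp

lemma LegF_ode (hx : |x| ≤ 1) {z : ℂ} (hz : ‖z‖ < 1) :
    (1 - 2 * (x : ℂ) * z + z ^ 2) * deriv (LegF x) z = ((x : ℂ) - z) * LegF x z := by
  have hA := A_ne (l_norm hx) hz
  have hB := A_ne (lb_norm hx) hz
  have hnum : lr x * (1 - z * lrb x) + lrb x * (1 - z * lr x) = 2 * ((x : ℂ) - z) := by
    linear_combination l_sum (x := x) - 2 * z * l_prod hx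
  have h2 : -(-lr x / (1 - z * lr x) + -lrb x / (1 - z * lrb x)) / 2
      = ((x : ℂ) - z) / ((1 - z * lr x) * (1 - z * lrb x)) := by
    rw [div_add_div _ _ hA hB, neg_div, div_div, ← neg_div,
      div_eq_div_iff (mul_ne_zero (mul_ne_zero hA hB) two_ne_zero) (mul_ne_zero hA hB)]
    linear_combination ((1 - z * lr x) * (1 - z * lrb x)) * hnum
  rw [(LegF_hasDerivAt hx hz).deriv, h2, w_fac hx]
  field_simp

end

noncomputable def legP (x : ℝ) : FormalMultilinearSeries ℂ ℂ ℂ :=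
  cauchyPowerSeries (LegF x) 0 ((1 / 2 : ℝ≥0) : ℝ)

section
variable {x : ℝ}

lemma LegF_diff (hx : |x| ≤ 1) : DifferentiableOn ℂ (LegF x) (Metric.ball 0 1) := by
  intro z hz
  rw [Metric.mem_ball, dist_zero_right] at hz
  exact ((LegF_hasDerivAt hx hz).differentiableAt).differentiableWithinAt

lemma legP_half (hx : |x| ≤ 1) :
    HasFPowerSeriesOnBall (LegF x) (legP x) 0 ((1 / 2 : ℝ≥0) : ℝ≥0∞) := by
  refine DifferentiableOn.hasFPowerSeriesOnBall ?_ (by norm_num)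
  refine (LegF_diff hx).mono (Metric.closedBall_subset_ball ?_)
  norm_num

lemma legP_onBall (hx : |x| ≤ 1) (R : ℝ≥0) (h0 : 0 < R) (h1 : (R : ℝ) < 1) :
    HasFPowerSeriesOnBall (LegF x) (legP x) 0 (R : ℝ≥0∞) := by
  have h := DifferentiableOn.hasFPowerSeriesOnBall
    ((LegF_diff hx).mono (Metric.closedBall_subset_ball (x := (0 : ℂ)) h1)) h0
  rwa [h.hasFPowerSeriesAt.eq_formalMultilinearSeries (legP_half hx).hasFPowerSeriesAt] at h

lemma hasSum_c (hx : |x| ≤ 1) {z : ℂ} (hz : ‖z‖ < 1) :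
    HasSum (fun n => (legP x).coeff n * z ^ n) (LegF x z) := by
  obtain ⟨R, hR0, hzR, hR1⟩ : ∃ R : ℝ≥0, 0 < R ∧ ‖z‖ < R ∧ (R : ℝ) < 1 := by
    refine ⟨⟨(‖z‖ + 1) / 2, by positivity⟩, ?_, ?_, ?_⟩
    · exact NNReal.coe_pos.mp (show (0:ℝ) < (‖z‖ + 1) / 2 by positivity)
    · show ‖z‖ < (‖z‖ + 1) / 2; linarith [norm_nonneg z]
    · show (‖z‖ + 1) / 2 < 1; linarith
  have h := (legP_onBall hx R hR0 hR1).hasSum (y := z) ?_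
  · simpa [FormalMultilinearSeries.apply_eq_pow_smul_coeff, smul_eq_mul, mul_comm] using h
  · rw [Metric.emetric_ball_nnreal, Metric.mem_ball, dist_zero_right]
    exact hzR

lemma hasSum_deriv (hx : |x| ≤ 1) {z : ℂ} (hz : ‖z‖ < 1) :
    HasSum (fun n : ℕ => (n : ℂ) * (legP x).coeff n * z ^ n) (z * deriv (LegF x) z) := by
  obtain ⟨R, hR0, hzR, hR1⟩ : ∃ R : ℝ≥0, 0 < R ∧ ‖z‖ < R ∧ (R : ℝ) < 1 := by
    refine ⟨⟨(‖z‖ + 1) / 2, by positivity⟩, ?_, ?_, ?_⟩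
    · exact NNReal.coe_pos.mp (show (0:ℝ) < (‖z‖ + 1) / 2 by positivity)
    · show ‖z‖ < (‖z‖ + 1) / 2; linarith [norm_nonneg z]
    · show (‖z‖ + 1) / 2 < 1; linarith
  have hmem : z ∈ Metric.eball (0 : ℂ) (R : ℝ≥0∞) := by
    rw [Metric.emetric_ball_nnreal, Metric.mem_ball, dist_zero_right]; exact hzR
  have h := ((legP_onBall hx R hR0 hR1).fderiv).hasSum (y := z) hmem
  -- apply the continuous linear map "evaluate at z"
  have h2 := h.mapL (ContinuousLinearMap.apply ℂ ℂ z)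
  simp only [ContinuousLinearMap.apply_apply] at h2
  have hterm : ∀ n, ((legP x).derivSeries n fun _ => z) z
      = ((n : ℂ) + 1) * (legP x).coeff (n + 1) * z ^ (n + 1) := by
    intro n
    rw [FormalMultilinearSeries.derivSeries_apply_diag,
      FormalMultilinearSeries.apply_eq_pow_smul_coeff]
    push_cast [nsmul_eq_mul, smul_eq_mul]
    ring
  have hval : fderiv ℂ (LegF x) (0 + z) z = z * deriv (LegF x) z := by
    rw [zero_add]
    have : deriv (LegF x) z = fderiv ℂ (LegF x) z 1 := rfl
    rw [this, ← smul_eq_mul, ← ContinuousLinearMap.map_smul, smul_eq_mul, mul_one]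
  rw [hval] at h2
  simp only [hterm] at h2
  -- now shift the index
  refine (hasSum_nat_add_iff'
    (f := fun n : ℕ => (n : ℂ) * (legP x).coeff n * z ^ n) 1).mp ?_
  simp only [Finset.range_one, Finset.sum_singleton, Nat.cast_zero, zero_mul, sub_zero]
  convert h2 using 2 with n
  push_cast
  ring

end

section
variable {x : ℝ}

lemma bonnet (hx : |x| ≤ 1) : ∀ n : ℕ,
    (n : ℂ) * (legP x).coeff n
      - 2 * x * (sh (fun m : ℕ => (m : ℂ) * (legP x).coeff m)) n
      + sh (sh (fun m : ℕ => (m : ℂ) * (legP x).coeff m)) n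
      - x * (sh ((legP x).coeff)) n + sh (sh ((legP x).coeff)) n = 0 := by
  apply _root_.coeff_eq_zero
  intro z hz
  have H1 := hasSum_c hx hz
  have H2 := hasSum_deriv hx hz
  have H3 := hasSum_shift H2
  have H4 := hasSum_shift H3
  have H5 := hasSum_shift H1
  have H6 := hasSum_shift H5
  have Hc := (((H2.sub (H3.mul_left (2 * (x : ℂ)))).add H4).sub (H5.mul_left (x : ℂ))).add H6
  have hT : (((z * deriv (LegF x) z - 2 * (x : ℂ) * (z * (z * deriv (LegF x) z)))
      + z * (z * (z * deriv (LegF x) z))) - (x : ℂ) * (z * LegF x z)) + z * (z * LegF x z)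
      = 0 := by
    linear_combination z * (LegF_ode hx hz)
  rw [hT] at Hc
  convert Hc using 1
  · rfl
  funext n
  ring

lemma c_zero (hx : |x| ≤ 1) : (legP x).coeff 0 = 1 := by
  have h := (legP_half hx).coeff_zero 1
  rw [LegF_zero] at h
  exact h

lemma c_one (hx : |x| ≤ 1) : (legP x).coeff 1 = x := by
  have h := bonnet hx 1
  have e1 : sh (fun m : ℕ => (m : ℂ) * (legP x).coeff m) 1 = 0 := by
    show ((0 : ℕ) : ℂ) * (legP x).coeff 0 = 0
    simp
  have e2 : sh (sh (fun m : ℕ => (m : ℂ) * (legP x).coeff m)) 1 = 0 := rfl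
  have e3 : sh ((legP x).coeff) 1 = (legP x).coeff 0 := rfl
  have e4 : sh (sh ((legP x).coeff)) 1 = 0 := rfl
  rw [e1, e2, e3, e4, c_zero hx] at h
  push_cast at h
  linear_combination h

lemma c_eq (hx : |x| ≤ 1) : ∀ n : ℕ, (legP x).coeff n = (legendre n x : ℂ) := by
  intro n
  induction n using Nat.twoStepInduction with
  | zero => rw [c_zero hx]; norm_num [legendre]
  | one => rw [c_one hx]; norm_num [legendre]
  | more n ih1 ih2 =>
    have h := bonnet hx (n + 2)
    have e1 : sh (fun m : ℕ => (m : ℂ) * (legP x).coeff m) (n + 2)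
        = ((n : ℂ) + 1) * (legP x).coeff (n + 1) := by
      show ((n + 1 : ℕ) : ℂ) * (legP x).coeff (n + 1) = _
      push_cast; ring
    have e2 : sh (sh (fun m : ℕ => (m : ℂ) * (legP x).coeff m)) (n + 2)
        = (n : ℂ) * (legP x).coeff n := rfl
    have e3 : sh ((legP x).coeff) (n + 2) = (legP x).coeff (n + 1) := rfl
    have e4 : sh (sh ((legP x).coeff)) (n + 2) = (legP x).coeff n := rfl
    rw [e1, e2, e3, e4, ih1, ih2] at h
    have hden : ((n : ℂ) + 2) ≠ 0 := by
      have : ((n + 2 : ℕ) : ℂ) ≠ 0 := Nat.cast_ne_zero.mpr (by omega)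
      push_cast at this
      exact this
    have hleg : legendre (n + 2) x
        = ((2 * (n : ℝ) + 3) * x * legendre (n + 1) x
            - ((n : ℝ) + 1) * legendre n x) / ((n : ℝ) + 2) := rfl
    rw [hleg]
    push_cast at h ⊢
    field_simp
    linear_combination h
end

theorem legendre_generating_function (x t : ℝ) (hx : |x| ≤ 1) (ht : |t| < 1) :
    ∑' n : ℕ, legendre n x * t ^ n = 1 / Real.sqrt (1 - 2 * x * t + t ^ 2) := by
  have htC : ‖(t : ℂ)‖ < 1 := by rwa [Complex.norm_real, Real.norm_eq_abs]
  have hsum : HasSum (fun n : ℕ => ((legendre n x * t ^ n : ℝ) : ℂ)) (LegF x t) := by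
    have h := hasSum_c hx htC
    simp only [c_eq hx] at h
    convert h using 2 with n
    push_cast
    ring
  have hre : 0 < (1 - (t : ℂ) * lr x).re := re_pos (l_norm hx) htC
  have harg : (1 - (t : ℂ) * lr x).arg ≠ Real.pi := by
    intro hc
    rw [Complex.arg_eq_pi_iff] at hc
    linarith [hc.1]
  have hconj : (1 : ℂ) - (t : ℂ) * lrb x = starRingEnd ℂ (1 - (t : ℂ) * lr x) := by
    simp only [map_sub, map_mul, map_one, Complex.conj_ofReal, lr, lrb, map_add,
      Complex.conj_I]
    ring
  set u : ℝ := Real.exp (-(Complex.log (1 - (t : ℂ) * lr x)).re) with hu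
  have hFu : LegF x t = (u : ℂ) := by
    rw [LegF, hconj, Complex.log_conj _ harg, Complex.add_conj]
    rw [show -(((2 * (Complex.log (1 - (t : ℂ) * lr x)).re : ℝ) : ℂ)) / 2
        = ((-(Complex.log (1 - (t : ℂ) * lr x)).re : ℝ) : ℂ) by push_cast; ring]
    rw [← Complex.ofReal_exp]
  have hupos : 0 < u := Real.exp_pos _
  have hq := LegF_sq hx htC
  rw [hFu] at hq
  have hqR : u ^ 2 * (1 - 2 * x * t + t ^ 2) = 1 := by
    exact_mod_cast hq
  have hwpos : 0 < 1 - 2 * x * t + t ^ 2 := by nlinarith [sq_nonneg u, hupos]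
  have hsqrt : Real.sqrt (1 - 2 * x * t + t ^ 2) = u⁻¹ := by
    rw [show 1 - 2 * x * t + t ^ 2 = (u⁻¹) ^ 2 by field_simp; nlinarith [hqR]]
    exact Real.sqrt_sq (by positivity)
  rw [hFu] at hsum
  have hsumR : HasSum (fun n : ℕ => legendre n x * t ^ n) u := Complex.hasSum_ofReal.mp hsum
  rw [hsumR.tsum_eq, hsqrt]
  field_simp
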